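/- For every integer m ≥ 1 and every real R > 1/|f|, the counterclockwise circle integral ∮_{|t|=R} φ_m(t)/(t(f t+1)) dt equals 0, where φ_m(t) denotes the evaluation at t of the polynomial φ_m. -/

import Mathlib

open Polynomial

/-- For every `m ≥ 1` and `R > 1/|f|`, `∮_{|t|=R} φ_m(t)/(t(ft+1)) dt = 0`. -/
theorem circleIntegral_phi_m_div (f : ℂ) (hf : f ≠ 0) (hf1 : f ≠ -1)
    (D : Polynomial ℂ → Polynomial ℂ)
    (hD : ∀ p, D p = C ((f + 1)⁻¹) * (X * (X - 1) * (C f * X + 1)) * p.derivative)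
    (φ : ℕ → Polynomial ℂ)
    (hφ0 : φ 0 = C ((f + 1)⁻¹) * (X - 1))
    (hφ : ∀ b, φ (b + 1) = D (φ b)) :
    ∀ m : ℕ, 1 ≤ m → ∀ R : ℝ, 1 / ‖f‖ < R →
      (∮ t in C(0, R), (φ m).eval t / (t * (f * t + 1))) = 0 := by
  intro m hm R hR
  obtain ⟨n, rfl⟩ : ∃ n, m = n + 1 := ⟨m - 1, (Nat.succ_pred_eq_of_pos hm).symm⟩
  have hf1' : f + 1 ≠ 0 := fun h => hf1 (by linear_combination h)
  have hfabs : 0 < ‖f‖ := norm_pos_iff.mpr hf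
  have hR0 : 0 < R := lt_trans (by positivity) hR
  set q : Polynomial ℂ := C ((f + 1)⁻¹) * (X - 1) * (φ n).derivative with hq
  have hcong : Set.EqOn (fun t => (φ (n + 1)).eval t / (t * (f * t + 1)))
      (fun t => q.eval t) (Metric.sphere (0 : ℂ) R) := by
    intro t ht
    have htR : ‖t‖ = R := by simpa using ht
    have ht0 : t ≠ 0 := by
      intro h; rw [h] at htR; simp at htR; linarith
    have hft : f * t + 1 ≠ 0 := by
      intro h
      have h1 : f * t = -1 := by linear_combination h
      have h2 : ‖f * t‖ = 1 := by rw [h1]; simp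
      rw [norm_mul, htR] at h2
      have : R = 1 / ‖f‖ := by field_simp; linarith
      rw [this] at hR; linarith
    have hmul : t * (f * t + 1) ≠ 0 := mul_ne_zero ht0 hft
    show (φ (n + 1)).eval t / (t * (f * t + 1)) = q.eval t
    rw [hφ, hD, hq]
    simp only [eval_mul, eval_sub, eval_add, eval_one, eval_C, eval_X]
    field_simp
  rw [circleIntegral.integral_congr hR0.le hcong]
  exact Complex.circleIntegral_eq_zero_of_differentiable_on_off_countable hR0.le
    Set.countable_empty (Polynomial.continuous _).continuousOn
    (fun z _ => (Polynomial.differentiable _).differentiableAt)
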